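/- For every integer k ≥ 2, there exists a one-way probabilistic blind one-counter automaton (1P1BCA) over the alphabet {a,b} that recognizes the language EQ* with negative one-sided error bound 1/k: every string in EQ* is accepted with probability 1, and every string over {a,b} not in EQ* is accepted with probability at most 1/k. -/

import Mathlib

/-- Input symbols extended with the left (`cent`) and right (`dollar`) end-markers. -/
inductive TSym (α : Type) : Type
  | cent : TSym α
  | letter : α → TSym α
  | dollar : TSym α

/-- The tape content `¢ w $` for an input word `w`. -/
def tagged {α : Type} (w : List α) : List (TSym α) :=
  TSym.cent :: (w.map TSym.letter ++ [TSym.dollar])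

/-- A one-way probabilistic blind one-counter automaton: no zero-test during the
computation, and acceptance additionally requires the counter to be zero at the end. -/
structure OneP1BCA (α : Type) where
  Q : Type
  [fintypeQ : Fintype Q]
  [decQ : DecidableEq Q]
  q0 : Q
  acc : Finset Q
  m : ℕ
  δ : Q → TSym α → Q → ℤ → ℝ
  nonneg : ∀ q σ q' c, 0 ≤ δ q σ q' c
  support : ∀ q σ q' c, δ q σ q' c ≠ 0 → |c| ≤ (m : ℤ)
  total : ∀ q σ, (∑ q' : Q, ∑ c ∈ Finset.Icc (-(m : ℤ)) (m : ℤ), δ q σ q' c) = 1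

attribute [instance] OneP1BCA.fintypeQ OneP1BCA.decQ

namespace OneP1BCA

variable {α : Type} (M : OneP1BCA α)

/-- One step of the evolution of the probability distribution over configurations. -/
noncomputable def stepD (μ : M.Q × ℤ → ℝ) (σ : TSym α) : M.Q × ℤ → ℝ :=
  fun p' => ∑ q : M.Q, ∑ c ∈ Finset.Icc (-(M.m : ℤ)) (M.m : ℤ),
    μ (q, p'.2 - c) * M.δ q σ p'.1 c

/-- Initial distribution: point mass on `(q0, 0)`. -/
def initD : M.Q × ℤ → ℝ := fun p => if p = (M.q0, 0) then 1 else 0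

/-- Distribution over configurations after reading `¢ w $`. -/
noncomputable def finalD (w : List α) : M.Q × ℤ → ℝ := (tagged w).foldl M.stepD M.initD

/-- Acceptance probability: total probability of paths ending in an accepting
state with counter value exactly `0`. -/
noncomputable def accProb (w : List α) : ℝ :=
  ∑ q ∈ M.acc, M.finalD w (q, 0)

/-- `M` recognizes `L` with negative one-sided error bound `ε`. -/
def recognizesNegOneSided (L : Set (List α)) (ε : ℝ) : Prop :=
  (∀ w ∈ L, M.accProb w = 1) ∧ (∀ w ∉ L, M.accProb w ≤ ε)

end OneP1BCA

/-- The alphabet `{a, b}`. -/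
inductive Γ2 : Type
  | a : Γ2
  | b : Γ2
deriving DecidableEq

/-- The language `EQ = { a^n b^n : n > 0 }`. -/
def EQ : Language Γ2 :=
  {w | ∃ n : ℕ, 0 < n ∧ w = List.replicate n Γ2.a ++ List.replicate n Γ2.b}

/-- The Kleene closure `EQ*`. -/
def EQstar : Language Γ2 := KStar.kstar EQ

/-! ### Auxiliary development for Statement 12 -/

namespace Stmt12

/-- States of the automaton. -/
inductive St (k : ℕ) : Type
  | start | acc | rej
  | A (c : Fin k)
  | B (c : Fin k)
deriving DecidableEq, Fintype

/-- Coefficient attached to a random choice `c : Fin k`: an integer in `{1, …, k}`. -/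
def coef {k : ℕ} (c : Fin k) : ℤ := (c : ℤ) + 1

lemma coef_injective {k : ℕ} : Function.Injective (coef (k := k)) := by
  intro c c' h
  unfold coef at h
  exact Fin.ext (by omega)

lemma coef_abs_le {k : ℕ} (c : Fin k) : |coef c| ≤ (k : ℤ) := by
  have := c.2
  unfold coef
  rw [abs_of_nonneg (by omega)]
  omega

/-- The uniform split into `k` branches entering a new `a`-block. -/
def split (k : ℕ) : List (St k × ℤ) := (List.finRange k).map (fun c => (St.A c, coef c))

@[simp] lemma split_length (k : ℕ) : (split k).length = k := by simp [split]

/-- Transition lists: each entry of `trans q σ` is an equally likely outcome. -/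
def trans {k : ℕ} : St k → TSym Γ2 → List (St k × ℤ)
  | .start, .cent => [(.start, 0)]
  | .start, .letter .a => split k
  | .start, .letter .b => [(.rej, 0)]
  | .start, .dollar => [(.acc, 0)]
  | .A c, .letter .a => [(.A c, coef c)]
  | .A c, .letter .b => [(.B c, -coef c)]
  | .A _, .cent => [(.rej, 0)]
  | .A _, .dollar => [(.rej, 0)]
  | .B _, .letter .a => split k
  | .B c, .letter .b => [(.B c, -coef c)]
  | .B _, .dollar => [(.acc, 0)]
  | .B _, .cent => [(.rej, 0)]
  | .acc, _ => [(.rej, 0)]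
  | .rej, _ => [(.rej, 0)]

lemma trans_rej {k : ℕ} (σ : TSym Γ2) : trans (k := k) .rej σ = [(.rej, 0)] := by
  rcases σ with _ | g | _ <;> first | rfl | (cases g <;> rfl)

lemma trans_bound {k : ℕ} (q : St k) (σ : TSym Γ2) :
    ∀ p ∈ trans q σ, |p.2| ≤ (k : ℤ) := by
  have hsplit : ∀ p ∈ split k, |p.2| ≤ (k : ℤ) := by
    intro p hp
    simp only [split, List.mem_map] at hp
    obtain ⟨c, -, rfl⟩ := hp
    exact coef_abs_le c
  have habs : ∀ c : Fin k, |(-coef c)| ≤ (k : ℤ) := fun c => by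
    rw [abs_neg]; exact coef_abs_le c
  rcases q with _ | _ | _ | c | c <;>
    rcases σ with _ | g | _ <;>
    first
      | (intro p hp; exact hsplit p hp)
      | (cases g <;>
          first
            | (intro p hp; exact hsplit p hp)
            | (intro p hp
               simp only [trans, List.mem_singleton] at hp
               subst hp
               first
                 | simpa using Int.natCast_nonneg k
                 | exact coef_abs_le _
                 | exact habs _))
      | (intro p hp
         simp only [trans, List.mem_singleton] at hp
         subst hp
         simpa using Int.natCast_nonneg k)

lemma trans_length_pos {k : ℕ} (hk : k ≠ 0) (q : St k) (σ : TSym Γ2) :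
    0 < (trans q σ).length := by
  rcases q with _ | _ | _ | c | c <;>
    rcases σ with _ | g | _ <;>
    first
      | (simp [trans]; omega)
      | (cases g <;> (simp [trans]; try omega))
      | simp [trans]

end Stmt12


namespace Stmt12

lemma sum_count_eq_length {β : Type*} [BEq β] [LawfulBEq β] [DecidableEq β] (l : List β) (s : Finset β)
    (h : ∀ x ∈ l, x ∈ s) : (∑ x ∈ s, l.count x) = l.length := by
  induction l with
  | nil => simp
  | cons a l ih =>
    have ha : a ∈ s := h a (List.mem_cons_self)
    simp only [List.count_cons, beq_iff_eq]
    rw [Finset.sum_add_distrib, ih (fun x hx => h x (List.mem_cons_of_mem _ hx))]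
    have : (∑ x ∈ s, if a = x then 1 else 0) = 1 := by
      rw [Finset.sum_ite_eq s a (fun _ => 1)]
      simp [ha]
    simp [this]

/-- The transition probabilities: uniform over the list `trans q σ`. -/
noncomputable def δk {k : ℕ} (q : St k) (σ : TSym Γ2) (q' : St k) (c : ℤ) : ℝ :=
  ((trans q σ).count (q', c) : ℝ) / ((trans q σ).length : ℝ)

lemma δk_support {k : ℕ} (q : St k) (σ : TSym Γ2) (q' : St k) (c : ℤ)
    (h : ¬ |c| ≤ (k : ℤ)) : δk q σ q' c = 0 := by
  have : (q', c) ∉ trans q σ := fun hmem => h (trans_bound q σ _ hmem)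
  simp [δk, List.count_eq_zero.mpr this]

/-- The automaton. -/
noncomputable def Mk (k : ℕ) (hk : k ≠ 0) : OneP1BCA Γ2 where
  Q := St k
  q0 := .start
  acc := {St.acc}
  m := k
  δ := δk
  nonneg := fun q σ q' c => by
    apply div_nonneg <;> positivity
  support := fun q σ q' c h => by
    have hcount : (trans q σ).count (q', c) ≠ 0 := by
      intro h0
      apply h
      simp [δk, h0]
    have hmem : (q', c) ∈ trans q σ := by
      by_contra hmem
      exact hcount (List.count_eq_zero.mpr hmem)
    exact trans_bound q σ _ hmem
  total := fun q σ => by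
    have hlen : (0 : ℝ) < ((trans q σ).length : ℝ) := by
      exact_mod_cast trans_length_pos hk q σ
    have keyn : (∑ p ∈ Finset.univ ×ˢ Finset.Icc (-(k : ℤ)) (k : ℤ),
        (trans q σ).count p) = (trans q σ).length := by
      apply sum_count_eq_length
      intro x hx
      rw [Finset.mem_product]
      exact ⟨Finset.mem_univ _, Finset.mem_Icc.mpr (abs_le.mp (trans_bound q σ x hx))⟩
    simp only [δk, ← Finset.sum_div]
    rw [div_eq_one_iff_eq (ne_of_gt hlen), ← Finset.sum_product']
    exact_mod_cast keyn

attribute [reducible] Mk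

end Stmt12

namespace Stmt12

/-- Items of a weighted configuration list: (probability, state, counter). -/
abbrev Itm (k : ℕ) := ℝ × St k × ℤ

/-- The distribution represented by a weighted configuration list. -/
noncomputable def mass {k : ℕ} (L : List (Itm k)) (p : St k × ℤ) : ℝ :=
  (L.map (fun it => if it.2 = p then it.1 else 0)).sum

@[simp] lemma mass_nil {k : ℕ} (p : St k × ℤ) : mass [] p = 0 := rfl

lemma mass_cons {k : ℕ} (it : Itm k) (L : List (Itm k)) (p : St k × ℤ) :
    mass (it :: L) p = (if it.2 = p then it.1 else 0) + mass L p := by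
  simp [mass]

lemma mass_append {k : ℕ} (L1 L2 : List (Itm k)) (p : St k × ℤ) :
    mass (L1 ++ L2) p = mass L1 p + mass L2 p := by
  simp [mass]

/-- One probabilistic step applied to a single item. -/
noncomputable def step1 {k : ℕ} (σ : TSym Γ2) (it : Itm k) : List (Itm k) :=
  (trans it.2.1 σ).map (fun pc => (it.1 / ((trans it.2.1 σ).length : ℝ), pc.1, it.2.2 + pc.2))

/-- One probabilistic step applied to a weighted configuration list. -/
noncomputable def run {k : ℕ} (L : List (Itm k)) (σ : TSym Γ2) : List (Itm k) := L.flatMap (step1 σ)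

/-- Run over a word. -/
noncomputable def runW {k : ℕ} (L : List (Itm k)) (s : List (TSym Γ2)) : List (Itm k) := s.foldl run L

@[simp] lemma runW_nil {k : ℕ} (L : List (Itm k)) : runW L [] = L := rfl

lemma runW_cons {k : ℕ} (L : List (Itm k)) (σ : TSym Γ2) (s : List (TSym Γ2)) :
    runW L (σ :: s) = runW (run L σ) s := rfl

lemma runW_append {k : ℕ} (L : List (Itm k)) (s t : List (TSym Γ2)) :
    runW L (s ++ t) = runW (runW L s) t := List.foldl_append ..

lemma run_singleton {k : ℕ} (it : Itm k) (σ : TSym Γ2) : run [it] σ = step1 σ it := by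
  simp [run]

lemma runW_flatMap {k : ℕ} {β : Type*} (l : List β) (f : β → List (Itm k))
    (s : List (TSym Γ2)) : runW (l.flatMap f) s = l.flatMap (fun x => runW (f x) s) := by
  induction s generalizing l f with
  | nil => simp
  | cons σ s ih =>
    rw [runW_cons]
    have : run (l.flatMap f) σ = l.flatMap (fun x => run (f x) σ) := by
      simp [run, List.flatMap_assoc]
    rw [this, ih]
    simp [runW_cons]

lemma runW_eq_flatMap {k : ℕ} (L : List (Itm k)) (s : List (TSym Γ2)) :
    runW L s = L.flatMap (fun it => runW [it] s) := by
  conv_lhs => rw [← List.flatMap_singleton' L]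
  rw [runW_flatMap]

/-- A helper: sum over a list of a point indicator. -/
lemma sum_map_ite_count {β : Type*} [BEq β] [LawfulBEq β] [DecidableEq β]
    (l : List β) (b : β) (a : ℝ) :
    (l.map fun y => if y = b then a else 0).sum = (l.count b : ℝ) * a := by
  induction l with
  | nil => simp
  | cons y l ih =>
    simp only [List.map_cons, List.sum_cons, ih, List.count_cons, beq_iff_eq]
    by_cases h : y = b <;> simp [h] <;> push_cast <;> ring

lemma stepD_mass {k : ℕ} (hk : k ≠ 0) (L : List (Itm k)) (σ : TSym Γ2) :
    (Mk k hk).stepD (mass L) σ = mass (run L σ) := by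
  induction L with
  | nil =>
    funext p'
    simp [OneP1BCA.stepD, mass, run]
  | cons it L ih =>
    funext p'
    have hsplit : (Mk k hk).stepD (mass (it :: L)) σ p'
        = (Mk k hk).stepD (fun p : St k × ℤ => if it.2 = p then it.1 else 0) σ p'
          + (Mk k hk).stepD (mass L) σ p' := by
      simp only [OneP1BCA.stepD, mass_cons]
      rw [← Finset.sum_add_distrib]
      apply Finset.sum_congr rfl
      intro q _
      rw [← Finset.sum_add_distrib]
      apply Finset.sum_congr rfl
      intro c _
      ring
    rw [hsplit, ih]
    have hrun : run (it :: L) σ = step1 σ it ++ run L σ := by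
      simp [run]
    rw [hrun]
    refine (congrArg (· + mass (run L σ) p') ?_).trans (mass_append _ _ _).symm
    -- single item case
    obtain ⟨w, q0', x⟩ := it
    show (Mk k hk).stepD (fun p : St k × ℤ => if (q0', x) = p then w else 0) σ p'
      = mass (step1 σ (w, q0', x)) p'
    have hrhs : mass (step1 σ (w, q0', x)) p'
        = ((trans q0' σ).count (p'.1, p'.2 - x) : ℝ)
          * (w / ((trans q0' σ).length : ℝ)) := by
      rw [mass, step1, List.map_map]
      have hfun : ((fun it : Itm k => if it.2 = p' then it.1 else 0) ∘
          (fun pc : St k × ℤ => (w / ((trans q0' σ).length : ℝ), pc.1, x + pc.2)))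
          = (fun pc : St k × ℤ => if pc = (p'.1, p'.2 - x)
              then w / ((trans q0' σ).length : ℝ) else 0) := by
        funext pc
        show (if (pc.1, x + pc.2) = p' then w / ((trans q0' σ).length : ℝ) else 0) = _
        have hiff : ((pc.1, x + pc.2) = p') ↔ (pc = (p'.1, p'.2 - x)) := by
          obtain ⟨p1, p2⟩ := p'
          obtain ⟨c1, c2⟩ := pc
          simp only [Prod.mk.injEq]
          constructor
          · rintro ⟨rfl, h2⟩; exact ⟨rfl, by omega⟩
          · rintro ⟨rfl, rfl⟩; exact ⟨rfl, by omega⟩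
        rw [if_congr hiff rfl rfl]
      rw [hfun]
      exact sum_map_ite_count _ _ _
    have hlhs : (Mk k hk).stepD (fun p : St k × ℤ => if (q0', x) = p then w else 0) σ p'
        = w * δk q0' σ p'.1 (p'.2 - x) := by
      show (∑ q : St k, ∑ c ∈ Finset.Icc (-(k:ℤ)) (k:ℤ),
          (if (q0', x) = (q, p'.2 - c) then w else 0) * δk q σ p'.1 c)
        = w * δk q0' σ p'.1 (p'.2 - x)
      have step : ∀ q : St k, (∑ c ∈ Finset.Icc (-(k:ℤ)) (k:ℤ),
            (if (q0', x) = (q, p'.2 - c) then w else 0) * δk q σ p'.1 c)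
          = if q = q0' then w * δk q0' σ p'.1 (p'.2 - x) else 0 := by
        intro q
        by_cases hq : q = q0'
        · rw [if_pos hq]
          subst hq
          have hc : ∀ c ∈ Finset.Icc (-(k:ℤ)) (k:ℤ),
              (if ((q : St k), x) = (q, p'.2 - c) then w else 0) * δk q σ p'.1 c
              = if c = p'.2 - x then w * δk q σ p'.1 c else 0 := by
            intro c _
            by_cases hcc : c = p'.2 - x
            · rw [if_pos, if_pos hcc]
              subst hcc
              exact Prod.ext rfl (by omega)
            · rw [if_neg, if_neg hcc]
              · ring
              · intro h
                apply hcc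
                have h2 := congrArg Prod.snd h
                simp only at h2
                omega
          rw [Finset.sum_congr rfl hc,
            Finset.sum_ite_eq' _ (p'.2 - x) (fun c => w * δk q σ p'.1 c)]
          by_cases hin : p'.2 - x ∈ Finset.Icc (-(k:ℤ)) (k:ℤ)
          · rw [if_pos hin]
          · rw [if_neg hin]
            have h0 : δk q σ p'.1 (p'.2 - x) = 0 := by
              apply δk_support
              rw [Finset.mem_Icc] at hin
              intro habs
              rw [abs_le] at habs
              exact hin ⟨habs.1, habs.2⟩
            rw [h0, mul_zero]
        · rw [if_neg hq]
          apply Finset.sum_eq_zero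
          intro c _
          rw [if_neg, zero_mul]
          intro h
          exact hq (congrArg Prod.fst h).symm
      rw [Finset.sum_congr rfl (fun q _ => step q),
        Finset.sum_ite_eq' _ q0' (fun _ => w * δk q0' σ p'.1 (p'.2 - x))]
      simp
    rw [hlhs, hrhs, δk]
    ring

lemma initD_eq {k : ℕ} (hk : k ≠ 0) :
    (Mk k hk).initD = mass [((1 : ℝ), (St.start : St k), (0 : ℤ))] := by
  funext p
  simp only [OneP1BCA.initD, mass, List.map_cons, List.map_nil, List.sum_cons, List.sum_nil,
    add_zero]
  have : (p = ((Mk k hk).q0, 0)) ↔ (@Eq (St k × ℤ) ((St.start : St k), (0:ℤ)) p) := by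
    constructor <;> intro h <;> exact h.symm
  exact @if_congr _ _ _ _ _ _ _ _ _ this rfl rfl

lemma foldl_stepD {k : ℕ} (hk : k ≠ 0) (s : List (TSym Γ2)) :
    ∀ L : List (Itm k), s.foldl (Mk k hk).stepD (mass L) = mass (runW L s) := by
  induction s with
  | nil => intro L; rfl
  | cons σ s ih =>
    intro L
    exact (congrArg (fun μ => s.foldl (Mk k hk).stepD μ) (stepD_mass hk L σ)).trans (ih _)

lemma finalD_eq {k : ℕ} (hk : k ≠ 0) (w : List Γ2) :
    (Mk k hk).finalD w = mass (runW [((1:ℝ), (St.start : St k), (0:ℤ))] (tagged w)) := by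
  unfold OneP1BCA.finalD
  rw [initD_eq hk]
  exact foldl_stepD hk _ _

lemma accProb_eq {k : ℕ} (hk : k ≠ 0) (w : List Γ2) :
    (Mk k hk).accProb w
      = mass (runW [((1:ℝ), (St.start : St k), (0:ℤ))] (tagged w)) (St.acc, 0) := by
  unfold OneP1BCA.accProb
  rw [show (Mk k hk).acc = {St.acc} from rfl]
  exact (Finset.sum_singleton (fun q : St k => (Mk k hk).finalD w (q, 0)) St.acc).trans
    (congrFun (finalD_eq hk w) _)

end Stmt12

namespace Stmt12

@[simp] lemma trans_start_cent {k : ℕ} : trans (k:=k) .start .cent = [(.start, 0)] := rfl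
@[simp] lemma trans_start_a {k : ℕ} : trans (k:=k) .start (.letter .a) = split k := rfl
@[simp] lemma trans_start_b {k : ℕ} : trans (k:=k) .start (.letter .b) = [(.rej, 0)] := rfl
@[simp] lemma trans_start_dollar {k : ℕ} : trans (k:=k) .start .dollar = [(.acc, 0)] := rfl
@[simp] lemma trans_A_a {k : ℕ} (c : Fin k) :
  trans (.A c) (.letter .a) = [(.A c, coef c)] := rfl
@[simp] lemma trans_A_b {k : ℕ} (c : Fin k) :
  trans (.A c) (.letter .b) = [(.B c, -coef c)] := rfl
@[simp] lemma trans_A_dollar {k : ℕ} (c : Fin k) : trans (.A c) .dollar = [(.rej, 0)] := rfl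
@[simp] lemma trans_B_a {k : ℕ} (c : Fin k) : trans (.B c) (.letter .a) = split k := rfl
@[simp] lemma trans_B_b {k : ℕ} (c : Fin k) :
  trans (.B c) (.letter .b) = [(.B c, -coef c)] := rfl
@[simp] lemma trans_B_dollar {k : ℕ} (c : Fin k) : trans (.B c) .dollar = [(.acc, 0)] := rfl

lemma step1_of_single {k : ℕ} {q q' : St k} {c : ℤ} {σ : TSym Γ2}
    (h : trans q σ = [(q', c)]) (w : ℝ) (x : ℤ) :
    step1 σ (w, q, x) = [(w, q', x + c)] := by
  show (trans q σ).map _ = _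
  rw [h]
  simp

lemma flatMap_single {β γ : Type*} (l : List β) (g : β → γ) :
    (l.flatMap fun x => [g x]) = l.map g := List.map_eq_flatMap.symm

lemma runA {k : ℕ} (c : Fin k) (n : ℕ) : ∀ (w : ℝ) (x : ℤ),
    runW [(w, .A c, x)] (List.replicate n (.letter Γ2.a)) = [(w, .A c, x + n * coef c)] := by
  induction n with
  | zero => intro w x; simp
  | succ n ih =>
    intro w x
    rw [List.replicate_succ, runW_cons, run_singleton, step1_of_single (trans_A_a c), ih]
    rw [show x + coef c + (n : ℤ) * coef c = x + ((n + 1 : ℕ) : ℤ) * coef c by push_cast; ring]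

lemma runBb {k : ℕ} (c : Fin k) (n : ℕ) : ∀ (w : ℝ) (x : ℤ),
    runW [(w, .B c, x)] (List.replicate n (.letter Γ2.b)) = [(w, .B c, x - n * coef c)] := by
  induction n with
  | zero => intro w x; simp
  | succ n ih =>
    intro w x
    rw [List.replicate_succ, runW_cons, run_singleton, step1_of_single (trans_B_b c), ih]
    rw [show x + -coef c - (n : ℤ) * coef c = x - ((n + 1 : ℕ) : ℤ) * coef c by push_cast; ring]

lemma runRej {k : ℕ} (s : List (TSym Γ2)) : ∀ (w : ℝ) (x : ℤ),
    runW (k := k) [(w, .rej, x)] s = [(w, .rej, x)] := by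
  induction s with
  | nil => intro w x; simp
  | cons σ s ih =>
    intro w x
    rw [runW_cons, run_singleton, step1_of_single (trans_rej σ), add_zero, ih]

/-- Reading a full block `a^n b^m` (with `n ≥ 1`) from a state that splits on `a`. -/
lemma runBlock {k : ℕ} (q : St k) (hq : trans q (.letter Γ2.a) = split k)
    (n m : ℕ) (hn : 1 ≤ n) (w : ℝ) (x : ℤ) :
    runW [(w, q, x)] (List.replicate n (.letter Γ2.a) ++ List.replicate m (.letter Γ2.b))
    = (List.finRange k).map
        (fun c => (w / (k : ℝ), (if m = 0 then St.A c else St.B c),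
          x + coef c * ((n : ℤ) - (m : ℤ)))) := by
  obtain ⟨n', rfl⟩ : ∃ n', n = n' + 1 := ⟨n - 1, by omega⟩
  rw [List.replicate_succ, List.cons_append, runW_cons, run_singleton]
  have hstep : step1 (.letter Γ2.a) (w, q, x)
      = (List.finRange k).map (fun c => (w / (k : ℝ), St.A c, x + coef c)) := by
    show (trans q (.letter Γ2.a)).map _ = _
    rw [hq, split, List.map_map]
    apply List.map_congr_left
    intro c _
    simp only [Function.comp_apply, List.length_map, List.length_finRange]
  rw [hstep, runW_eq_flatMap, List.flatMap_map]
  have heach : ∀ c : Fin k,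
      runW [(w / (k : ℝ), St.A c, x + coef c)]
        (List.replicate n' (.letter Γ2.a) ++ List.replicate m (.letter Γ2.b))
      = [(w / (k : ℝ), (if m = 0 then St.A c else St.B c),
          x + coef c * (((n' + 1 : ℕ) : ℤ) - (m : ℤ)))] := by
    intro c
    rw [runW_append, runA]
    cases m with
    | zero =>
      rw [if_pos rfl]
      simp only [List.replicate_zero, runW_nil]
      rw [show x + coef c + (n' : ℤ) * coef c
        = x + coef c * (((n' + 1 : ℕ) : ℤ) - ((0 : ℕ) : ℤ)) by push_cast; ring]
    | succ m' =>
      rw [if_neg (Nat.succ_ne_zero m')]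
      rw [List.replicate_succ, runW_cons, run_singleton, step1_of_single (trans_A_b c), runBb]
      rw [show x + coef c + (n' : ℤ) * coef c + -coef c - (m' : ℤ) * coef c
        = x + coef c * (((n' + 1 : ℕ) : ℤ) - ((m' + 1 : ℕ) : ℤ)) by push_cast; ring]
  rw [show (fun c : Fin k => runW [(w / (k : ℝ), St.A c, x + coef c)]
      (List.replicate n' (.letter Γ2.a) ++ List.replicate m (.letter Γ2.b)))
    = (fun c : Fin k => [(w / (k : ℝ), (if m = 0 then St.A c else St.B c),
        x + coef c * (((n' + 1 : ℕ) : ℤ) - (m : ℤ)))]) from funext heach]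
  rw [flatMap_single]

/-! ### The abstract weight/counter process -/

noncomputable def branch (k : ℕ) (d : ℤ) (it : ℝ × ℤ) : List (ℝ × ℤ) :=
  (List.finRange k).map (fun c => (it.1 / (k : ℝ), it.2 + coef c * d))

noncomputable def gg (k : ℕ) (ds : List ℤ) (L : List (ℝ × ℤ)) : List (ℝ × ℤ) :=
  ds.foldl (fun L d => L.flatMap (branch k d)) L

@[simp] lemma gg_nil (k : ℕ) (L : List (ℝ × ℤ)) : gg k [] L = L := rfl

lemma gg_cons (k : ℕ) (d : ℤ) (ds : List ℤ) (L : List (ℝ × ℤ)) :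
    gg k (d :: ds) L = gg k ds (L.flatMap (branch k d)) := rfl

lemma gg_flatMap {β : Type*} (k : ℕ) (ds : List ℤ) (l : List β) (f : β → List (ℝ × ℤ)) :
    gg k ds (l.flatMap f) = l.flatMap (fun a => gg k ds (f a)) := by
  induction ds generalizing l f with
  | nil => rfl
  | cons d ds ih =>
    rw [gg_cons, List.flatMap_assoc, ih]
    simp only [gg_cons]

noncomputable def tot (L : List (ℝ × ℤ)) : ℝ := (L.map Prod.fst).sum

noncomputable def mass0 (t : ℤ) (L : List (ℝ × ℤ)) : ℝ :=
  (L.map fun it => if it.2 = t then it.1 else 0).sum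

@[simp] lemma tot_nil : tot [] = 0 := rfl
@[simp] lemma mass0_nil (t : ℤ) : mass0 t [] = 0 := rfl

lemma tot_append (L1 L2 : List (ℝ × ℤ)) : tot (L1 ++ L2) = tot L1 + tot L2 := by
  simp [tot]

lemma mass0_append (t : ℤ) (L1 L2 : List (ℝ × ℤ)) :
    mass0 t (L1 ++ L2) = mass0 t L1 + mass0 t L2 := by
  simp [mass0]

lemma list_sum_flatMap {β γ : Type*} [AddCommMonoid γ] (l : List β) (f : β → List γ) :
    (l.flatMap f).sum = (l.map (fun x => (f x).sum)).sum := by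
  induction l with
  | nil => simp
  | cons a l ih => simp [List.flatMap_cons, ih]

lemma tot_branch {k : ℕ} (hk : k ≠ 0) (d : ℤ) (it : ℝ × ℤ) : tot (branch k d it) = it.1 := by
  unfold tot branch
  rw [List.map_map]
  have : (Prod.fst ∘ fun c : Fin k => (it.1 / (k : ℝ), it.2 + coef c * d))
      = Function.const (Fin k) (it.1 / (k : ℝ)) := rfl
  rw [this, List.map_const, List.sum_replicate, List.length_finRange, nsmul_eq_mul,
    mul_div_cancel₀]
  exact Nat.cast_ne_zero.mpr hk

lemma tot_gg {k : ℕ} (hk : k ≠ 0) (ds : List ℤ) : ∀ L, tot (gg k ds L) = tot L := by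
  induction ds with
  | nil => intro L; simp
  | cons d ds ih =>
    intro L
    rw [gg_cons, ih]
    unfold tot
    rw [List.map_flatMap, list_sum_flatMap]
    apply congrArg
    apply List.map_congr_left
    intro it _
    have := tot_branch hk d it
    unfold tot at this
    exact this

lemma gg_weights_nonneg {k : ℕ} (ds : List ℤ) : ∀ L, (∀ it ∈ L, 0 ≤ it.1) →
    ∀ it ∈ gg k ds L, 0 ≤ it.1 := by
  induction ds with
  | nil => intro L h; simpa using h
  | cons d ds ih =>
    intro L h
    rw [gg_cons]
    apply ih
    intro it hit
    rw [List.mem_flatMap] at hit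
    obtain ⟨j, hj, hit⟩ := hit
    unfold branch at hit
    rw [List.mem_map] at hit
    obtain ⟨c, -, rfl⟩ := hit
    have := h j hj
    positivity

lemma mass0_le_tot (t : ℤ) (L : List (ℝ × ℤ)) (h : ∀ it ∈ L, 0 ≤ it.1) :
    mass0 t L ≤ tot L := by
  unfold mass0 tot
  apply List.sum_le_sum
  intro it hit
  by_cases hc : it.2 = t
  · simp [hc]
  · simp [hc, h it hit]

lemma mass0_nonneg (t : ℤ) (L : List (ℝ × ℤ)) (h : ∀ it ∈ L, 0 ≤ it.1) :
    0 ≤ mass0 t L := by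
  unfold mass0
  apply List.sum_nonneg
  intro x hx
  rw [List.mem_map] at hx
  obtain ⟨it, hit, rfl⟩ := hx
  by_cases hc : it.2 = t
  · simp [hc, h it hit]
  · simp [hc]

lemma gg_counters_const {k : ℕ} (ds : List ℤ) (h0 : ∀ d ∈ ds, d = 0) (x : ℤ) :
    ∀ L, (∀ it ∈ L, it.2 = x) → ∀ it ∈ gg k ds L, it.2 = x := by
  induction ds with
  | nil => intro L h; simpa using h
  | cons d ds ih =>
    intro L h
    rw [gg_cons]
    apply ih (fun d' hd' => h0 d' (List.mem_cons_of_mem _ hd'))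
    intro it hit
    rw [List.mem_flatMap] at hit
    obtain ⟨j, hj, hit⟩ := hit
    unfold branch at hit
    rw [List.mem_map] at hit
    obtain ⟨c, -, rfl⟩ := hit
    have hd : d = 0 := h0 d (List.mem_cons_self)
    simp [hd, h j hj]

lemma mass0_of_const (t x : ℤ) (L : List (ℝ × ℤ)) (h : ∀ it ∈ L, it.2 = x) :
    mass0 t L = if x = t then tot L else 0 := by
  induction L with
  | nil => simp
  | cons it L ih =>
    have hx : it.2 = x := h it (List.mem_cons_self)
    have ihL := ih (fun j hj => h j (List.mem_cons_of_mem _ hj))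
    unfold mass0 tot at *
    simp only [List.map_cons, List.sum_cons, ihL, hx]
    by_cases hxt : x = t <;> simp [hxt]

lemma sum_map_ite_le {β : Type*} (l : List β) (hnd : l.Nodup) (P : β → Prop)
    [DecidablePred P] (a : ℝ) (ha : 0 ≤ a)
    (hu : ∀ x ∈ l, ∀ y ∈ l, P x → P y → x = y) :
    (l.map fun x => if P x then a else 0).sum ≤ a := by
  induction l with
  | nil => simpa using ha
  | cons y l ih =>
    rw [List.nodup_cons] at hnd
    simp only [List.map_cons, List.sum_cons]
    by_cases hy : P y
    · rw [if_pos hy]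
      have hz : ∀ x ∈ l, ¬ P x := by
        intro x hx hPx
        exact hnd.1 (hu y (List.mem_cons_self) x (List.mem_cons_of_mem _ hx) hy hPx ▸ hx)
      have : (l.map fun x => if P x then a else 0).sum = 0 := by
        apply List.sum_eq_zero
        intro z hz'
        rw [List.mem_map] at hz'
        obtain ⟨x, hx, rfl⟩ := hz'
        rw [if_neg (hz x hx)]
      rw [this, add_zero]
    · rw [if_neg hy, zero_add]
      exact ih hnd.2 (fun x hx y' hy' => hu x (List.mem_cons_of_mem _ hx) y'
        (List.mem_cons_of_mem _ hy'))

lemma mass0_flatMap {β : Type*} (t : ℤ) (l : List β) (f : β → List (ℝ × ℤ)) :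
    mass0 t (l.flatMap f) = (l.map (fun a => mass0 t (f a))).sum := by
  unfold mass0
  rw [List.map_flatMap, list_sum_flatMap]

lemma gg_singleton_flatMap {k : ℕ} (d : ℤ) (ds : List ℤ) (w : ℝ) (x : ℤ) :
    gg k (d :: ds) [(w, x)] = (List.finRange k).flatMap
      (fun c => gg k ds [(w / (k : ℝ), x + coef c * d)]) := by
  rw [gg_cons, List.flatMap_singleton]
  unfold branch
  rw [← flatMap_single (List.finRange k) (fun c => ((w, x).1 / (k:ℝ), (w, x).2 + coef c * d)),
    gg_flatMap]

/-- Main probability bound: a nonzero coefficient forces acceptance mass `≤ w/k`. -/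
lemma gg_bound {k : ℕ} (hk : k ≠ 0) : ∀ ds : List ℤ, (∃ d ∈ ds, d ≠ 0) →
    ∀ (w : ℝ) (x t : ℤ), 0 ≤ w → mass0 t (gg k ds [(w, x)]) ≤ w / (k : ℝ) := by
  intro ds
  induction ds with
  | nil => rintro ⟨d, hd, -⟩; simp at hd
  | cons d ds ih =>
    rintro hex w x t hw
    have hkR : (0 : ℝ) < (k : ℝ) := by exact_mod_cast Nat.pos_of_ne_zero hk
    rw [gg_singleton_flatMap, mass0_flatMap]
    by_cases hds : ∃ d' ∈ ds, d' ≠ 0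
    · have hterm : ∀ c ∈ List.finRange k,
          mass0 t (gg k ds [(w / (k : ℝ), x + coef c * d)]) ≤ (w / (k : ℝ)) / (k : ℝ) :=
        fun c _ => ih hds (w / (k : ℝ)) _ t (by positivity)
      calc (List.map (fun c => mass0 t (gg k ds [(w / (k:ℝ), x + coef c * d)]))
              (List.finRange k)).sum
          ≤ (List.map (fun _ : Fin k => (w / (k:ℝ)) / (k:ℝ)) (List.finRange k)).sum :=
            List.sum_le_sum hterm
        _ = w / (k : ℝ) := by
            rw [show (fun _ : Fin k => (w / (k:ℝ)) / (k:ℝ))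
              = Function.const (Fin k) ((w / (k:ℝ)) / (k:ℝ)) from rfl]
            rw [List.map_const, List.sum_replicate, List.length_finRange, nsmul_eq_mul]
            field_simp
    · have hd : d ≠ 0 := by
        obtain ⟨d', hd', hne⟩ := hex
        rcases List.mem_cons.mp hd' with rfl | hmem
        · exact hne
        · exact absurd ⟨d', hmem, hne⟩ hds
      push_neg at hds
      have hterm : ∀ c : Fin k,
          mass0 t (gg k ds [(w / (k : ℝ), x + coef c * d)])
          = if x + coef c * d = t then w / (k : ℝ) else 0 := by
        intro c
        have hconst : ∀ it ∈ gg k ds [(w / (k:ℝ), x + coef c * d)], it.2 = x + coef c * d :=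
          gg_counters_const ds hds _ _ (by simp)
        rw [mass0_of_const _ _ _ hconst, tot_gg hk]
        simp [tot]
      rw [show (List.map (fun c => mass0 t (gg k ds [(w / (k:ℝ), x + coef c * d)]))
          (List.finRange k))
        = (List.map (fun c : Fin k => if x + coef c * d = t then w / (k:ℝ) else 0)
          (List.finRange k)) from List.map_congr_left (fun c _ => hterm c)]
      apply sum_map_ite_le _ (List.nodup_finRange k) _ _ (by positivity)
      intro c1 _ c2 _ h1 h2
      apply coef_injective
      have : coef c1 * d = coef c2 * d := by omega
      exact mul_right_cancel₀ hd this

end Stmt12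

namespace Stmt12

/-! ### Block decompositions of words -/

/-- Encoding of a block list: `a^{n₁} b^{m₁} ⋯ a^{n_r} b^{m_r}`. -/
def enc (bl : List (ℕ × ℕ)) : List Γ2 :=
  bl.flatMap (fun p => List.replicate p.1 Γ2.a ++ List.replicate p.2 Γ2.b)

@[simp] lemma enc_nil : enc [] = [] := rfl

lemma enc_cons (p : ℕ × ℕ) (bl : List (ℕ × ℕ)) :
    enc (p :: bl) = (List.replicate p.1 Γ2.a ++ List.replicate p.2 Γ2.b) ++ enc bl := by
  simp [enc]

lemma enc_append (bl1 bl2 : List (ℕ × ℕ)) : enc (bl1 ++ bl2) = enc bl1 ++ enc bl2 :=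
  List.flatMap_append ..

def goodBl (bl : List (ℕ × ℕ)) : Prop := ∀ p ∈ bl, 1 ≤ p.1 ∧ 1 ≤ p.2

lemma decomp (w : List Γ2) :
    (∃ v, w = Γ2.b :: v) ∨
    (∃ bl, goodBl bl ∧ w = enc bl) ∨
    (∃ bl n, goodBl bl ∧ 1 ≤ n ∧ w = enc bl ++ List.replicate n Γ2.a) := by
  induction w using List.reverseRecOn with
  | nil => exact Or.inr (Or.inl ⟨[], by simp [goodBl], rfl⟩)
  | append_singleton w x ih =>
    rcases ih with ⟨v, rfl⟩ | ⟨bl, hbl, rfl⟩ | ⟨bl, n, hbl, hn, rfl⟩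
    · exact Or.inl ⟨v ++ [x], rfl⟩
    · cases x with
      | a =>
        exact Or.inr (Or.inr ⟨bl, 1, hbl, le_refl 1, by simp⟩)
      | b =>
        rcases List.eq_nil_or_concat bl with rfl | ⟨bl', p, rfl⟩
        · exact Or.inl ⟨[], by simp⟩
        · refine Or.inr (Or.inl ⟨bl' ++ [(p.1, p.2 + 1)], ?_, ?_⟩)
          · intro q hq
            rcases List.mem_append.mp hq with h | h
            · exact hbl q (by simp [List.concat_eq_append, h])
            · have hq2 : q = (p.1, p.2 + 1) := by simpa using h
              subst hq2
              have := hbl p (by simp [List.concat_eq_append])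
              exact ⟨this.1, by omega⟩
          · rw [List.concat_eq_append, enc_append, enc_append]
            simp [enc, List.replicate_succ']
    · cases x with
      | a =>
        exact Or.inr (Or.inr ⟨bl, n + 1, hbl, by omega,
          by simp [List.replicate_succ', List.append_assoc]⟩)
      | b =>
        refine Or.inr (Or.inl ⟨bl ++ [(n, 1)], ?_, ?_⟩)
        · intro q hq
          rcases List.mem_append.mp hq with h | h
          · exact hbl q h
          · have hq2 : q = (n, 1) := by simpa using h
            subst hq2
            exact ⟨hn, le_refl 1⟩
        · rw [enc_append]
          simp [enc]

lemma enc_mem_EQstar (bl : List (ℕ × ℕ)) (h : ∀ p ∈ bl, 1 ≤ p.1 ∧ p.1 = p.2) :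
    enc bl ∈ EQstar := by
  rw [EQstar, Language.mem_kstar]
  refine ⟨bl.map (fun p => List.replicate p.1 Γ2.a ++ List.replicate p.2 Γ2.b), ?_, ?_⟩
  · rw [enc, List.flatMap_def]
  · intro y hy
    rw [List.mem_map] at hy
    obtain ⟨p, hp, rfl⟩ := hy
    exact ⟨p.1, (h p hp).1, by rw [← (h p hp).2]⟩

lemma mem_EQstar_enc {w : List Γ2} (h : w ∈ EQstar) :
    ∃ bl, (∀ p ∈ bl, 1 ≤ p.1 ∧ p.1 = p.2) ∧ w = enc bl := by
  rw [EQstar, Language.mem_kstar] at h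
  obtain ⟨S, rfl, hS⟩ := h
  induction S with
  | nil => exact ⟨[], by simp, rfl⟩
  | cons y S ih =>
    obtain ⟨bl, hbl, henc⟩ := ih (fun z hz => hS z (List.mem_cons_of_mem _ hz))
    obtain ⟨n, hn, hy⟩ := hS y (List.mem_cons_self)
    refine ⟨(n, n) :: bl, ?_, ?_⟩
    · rintro p hp
      rcases List.mem_cons.mp hp with rfl | hp
      · exact ⟨hn, rfl⟩
      · exact hbl p hp
    · rw [List.flatten_cons, enc_cons, ← henc, hy]

/-! ### Running the automaton over a decomposed word -/

def okSt {k : ℕ} (q : St k) : Prop := q = .start ∨ ∃ c, q = .B c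

lemma okSt_split {k : ℕ} (q : St k) (h : okSt q) : trans q (.letter Γ2.a) = split k := by
  rcases h with rfl | ⟨c, rfl⟩ <;> rfl

lemma runEnc {k : ℕ} (hk : k ≠ 0) (bl : List (ℕ × ℕ)) (hbl : goodBl bl) :
    ∀ (w : ℝ) (x : ℤ) (q : St k), okSt q →
      ((runW [(w, q, x)] ((enc bl).map TSym.letter)).map (fun it => (it.1, it.2.2))
        = gg k (bl.map fun p => (p.1 : ℤ) - (p.2 : ℤ)) [(w, x)])
      ∧ (∀ it ∈ runW [(w, q, x)] ((enc bl).map TSym.letter), okSt it.2.1) := by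
  induction bl with
  | nil =>
    intro w x q hq
    refine ⟨rfl, ?_⟩
    intro it hit
    simp only [enc_nil, List.map_nil, runW_nil, List.mem_singleton] at hit
    subst hit
    exact hq
  | cons p bl ih =>
    intro w x q hq
    obtain ⟨n, m⟩ := p
    have hn : 1 ≤ n := (hbl (n, m) (List.mem_cons_self)).1
    have hm : 1 ≤ m := (hbl (n, m) (List.mem_cons_self)).2
    have hbl' : goodBl bl := fun p hp => hbl p (List.mem_cons_of_mem _ hp)
    have henc : ((enc ((n, m) :: bl)).map TSym.letter)
        = (List.replicate n (.letter Γ2.a) ++ List.replicate m (.letter Γ2.b))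
          ++ (enc bl).map TSym.letter := by
      rw [enc_cons]
      simp [List.map_append, List.map_replicate]
    rw [henc, runW_append, runBlock q (okSt_split q hq) n m hn w x]
    have hmap : (List.map (fun c => (w / (k:ℝ), if m = 0 then St.A c else St.B c,
          x + coef c * ((n:ℤ) - (m:ℤ)))) (List.finRange k))
        = (List.map (fun c => (w / (k:ℝ), St.B c, x + coef c * ((n:ℤ) - (m:ℤ))))
          (List.finRange k)) := by
      apply List.map_congr_left
      intro c _
      rw [if_neg (by omega : ¬ m = 0)]
    rw [hmap, runW_eq_flatMap, List.flatMap_map]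
    have heach : ∀ c : Fin k,
        ((runW [(w / (k:ℝ), St.B c, x + coef c * ((n:ℤ) - (m:ℤ)))]
            ((enc bl).map TSym.letter)).map (fun it => (it.1, it.2.2))
          = gg k (bl.map fun p => (p.1 : ℤ) - (p.2 : ℤ))
              [(w / (k:ℝ), x + coef c * ((n:ℤ) - (m:ℤ)))])
        ∧ (∀ it ∈ runW [(w / (k:ℝ), St.B c, x + coef c * ((n:ℤ) - (m:ℤ)))]
            ((enc bl).map TSym.letter), okSt it.2.1) :=
      fun c => ih hbl' _ _ _ (Or.inr ⟨c, rfl⟩)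
    constructor
    · rw [List.map_flatMap, List.map_cons, gg_singleton_flatMap]
      exact congrArg (fun f => List.flatMap f (List.finRange k)) (funext fun c => (heach c).1)
    · intro it hit
      rw [List.mem_flatMap] at hit
      obtain ⟨c, -, hit⟩ := hit
      exact (heach c).2 it hit

end Stmt12

namespace Stmt12

lemma mass0_cons (t : ℤ) (it : ℝ × ℤ) (L : List (ℝ × ℤ)) :
    mass0 t (it :: L) = (if it.2 = t then it.1 else 0) + mass0 t L := by
  simp [mass0]

lemma run_cons_dollar {k : ℕ} (it : Itm k) (R : List (Itm k)) (σ : TSym Γ2) :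
    run (it :: R) σ = step1 σ it ++ run R σ := by
  simp [run]

/-- Reading `$` from accept-ready states turns the distribution into acceptance mass. -/
lemma mass_run_dollar {k : ℕ} (R : List (Itm k)) (hR : ∀ it ∈ R, okSt it.2.1) :
    mass (run R .dollar) (St.acc, 0)
      = mass0 0 (R.map (fun it => (it.1, it.2.2))) := by
  induction R with
  | nil => simp [run]
  | cons it R ih =>
    have hit := hR it (List.mem_cons_self)
    have hrest := fun j hj => hR j (List.mem_cons_of_mem _ hj)
    rw [run_cons_dollar, mass_append, ih hrest]
    obtain ⟨wgt, q, x⟩ := it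
    have hstep : step1 (TSym.dollar) ((wgt, q, x) : Itm k) = [(wgt, St.acc, x)] := by
      rcases hit with hit | ⟨c, hit⟩ <;> simp only at hit <;> subst hit
      · rw [step1_of_single trans_start_dollar, add_zero]
      · rw [step1_of_single (trans_B_dollar c), add_zero]
    rw [hstep, List.map_cons, mass0_cons]
    congr 1
    rw [mass_cons, mass_nil, add_zero]
    apply if_congr _ rfl rfl
    simp

/-- Reading `$` from `A`-states gives no acceptance mass. -/
lemma mass_run_dollar_A {k : ℕ} (R : List (Itm k)) (hR : ∀ it ∈ R, ∃ c, it.2.1 = St.A c) :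
    mass (run R .dollar) (St.acc, 0) = 0 := by
  induction R with
  | nil => simp [run]
  | cons it R ih =>
    have hit := hR it (List.mem_cons_self)
    rw [run_cons_dollar, mass_append, ih (fun j hj => hR j (List.mem_cons_of_mem _ hj)),
      add_zero]
    obtain ⟨wgt, q, x⟩ := it
    obtain ⟨c, hc⟩ := hit
    simp only at hc
    subst hc
    rw [step1_of_single (trans_A_dollar c), add_zero, mass_cons, mass_nil, add_zero]
    rw [if_neg]
    simp

lemma run_a_all_A {k : ℕ} (R : List (Itm k)) (hR : ∀ it ∈ R, okSt it.2.1) :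
    ∀ it ∈ run R (.letter Γ2.a), ∃ c, it.2.1 = St.A c := by
  intro it hit
  rw [run, List.mem_flatMap] at hit
  obtain ⟨j, hj, hit⟩ := hit
  have hsp := okSt_split _ (hR j hj)
  unfold step1 at hit
  rw [hsp, split, List.map_map, List.mem_map] at hit
  obtain ⟨c, -, rfl⟩ := hit
  exact ⟨c, rfl⟩

lemma runW_a_states {k : ℕ} (n : ℕ) : ∀ R : List (Itm k),
    (∀ it ∈ R, ∃ c, it.2.1 = St.A c) →
    ∀ it ∈ runW R (List.replicate n (.letter Γ2.a)), ∃ c, it.2.1 = St.A c := by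
  induction n with
  | zero => intro R h; simpa using h
  | succ n ih =>
    intro R h
    rw [List.replicate_succ, runW_cons]
    apply ih
    intro it hit
    rw [run, List.mem_flatMap] at hit
    obtain ⟨j, hj, hit⟩ := hit
    obtain ⟨c, hc⟩ := h j hj
    unfold step1 at hit
    rw [hc, trans_A_a, List.mem_map] at hit
    obtain ⟨pc, hpc, rfl⟩ := hit
    simp only [List.mem_singleton] at hpc
    subst hpc
    exact ⟨c, rfl⟩

lemma run_cent {k : ℕ} :
    run [((1:ℝ), (St.start : St k), (0:ℤ))] .cent = [((1:ℝ), St.start, (0:ℤ))] := by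
  rw [run_singleton, step1_of_single trans_start_cent, add_zero]

lemma runW_dollar {k : ℕ} (L : List (Itm k)) : runW L [.dollar] = run L .dollar := rfl

end Stmt12

/-- for every `k ≥ 2`, a 1P1BCA recognizes `EQ*` with negative
one-sided error bound `1/k`. -/
theorem stmt12 (k : ℕ) (hk : 2 ≤ k) : ∃ M : OneP1BCA Γ2,
    (∀ w ∈ EQstar, M.accProb w = 1) ∧ (∀ w ∉ EQstar, M.accProb w ≤ 1 / (k : ℝ)) := by
  have hk0 : k ≠ 0 := by omega
  have hkR : (0 : ℝ) < (k : ℝ) := by exact_mod_cast Nat.pos_of_ne_zero hk0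
  refine ⟨Stmt12.Mk k hk0, ?_, ?_⟩
  · -- words in EQ* are accepted with probability 1
    intro w hw
    obtain ⟨bl, hbl, rfl⟩ := Stmt12.mem_EQstar_enc hw
    rw [Stmt12.accProb_eq hk0, tagged, Stmt12.runW_cons, Stmt12.run_cent,
      Stmt12.runW_append, Stmt12.runW_dollar]
    have hgood : Stmt12.goodBl bl := fun p hp => ⟨(hbl p hp).1, (hbl p hp).2 ▸ (hbl p hp).1⟩
    obtain ⟨hproj, hstates⟩ :=
      Stmt12.runEnc hk0 bl hgood 1 0 Stmt12.St.start (Or.inl rfl)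
    rw [Stmt12.mass_run_dollar _ hstates, hproj]
    have hzero : ∀ d ∈ bl.map (fun p => ((p.1 : ℤ) - (p.2 : ℤ))), d = 0 := by
      intro d hd
      rw [List.mem_map] at hd
      obtain ⟨p, hp, rfl⟩ := hd
      have := (hbl p hp).2
      omega
    rw [Stmt12.mass0_of_const 0 0 _
      (Stmt12.gg_counters_const _ hzero 0 _ (by simp)), if_pos rfl, Stmt12.tot_gg hk0]
    simp [Stmt12.tot]
  · -- words outside EQ* are accepted with probability at most 1/k
    intro w hwn
    rcases Stmt12.decomp w with ⟨v, rfl⟩ | ⟨bl, hbl, rfl⟩ | ⟨bl, n, hbl, hn, rfl⟩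
    · -- the word starts with `b`: rejected with certainty
      rw [Stmt12.accProb_eq hk0, tagged, Stmt12.runW_cons, Stmt12.run_cent,
        List.map_cons, List.cons_append, Stmt12.runW_cons, Stmt12.run_singleton,
        Stmt12.step1_of_single Stmt12.trans_start_b, add_zero, Stmt12.runRej]
      rw [Stmt12.mass_cons, Stmt12.mass_nil, add_zero, if_neg (by simp)]
      positivity
    · -- a well-formed word not in EQ*: some block is unbalanced
      have hne : ∃ p ∈ bl, p.1 ≠ p.2 := by
        by_contra hall
        push_neg at hall
        exact hwn (Stmt12.enc_mem_EQstar bl (fun p hp => ⟨(hbl p hp).1, hall p hp⟩))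
      rw [Stmt12.accProb_eq hk0, tagged, Stmt12.runW_cons, Stmt12.run_cent,
        Stmt12.runW_append, Stmt12.runW_dollar]
      obtain ⟨hproj, hstates⟩ :=
        Stmt12.runEnc hk0 bl hbl 1 0 Stmt12.St.start (Or.inl rfl)
      rw [Stmt12.mass_run_dollar _ hstates, hproj]
      apply Stmt12.gg_bound hk0 _ _ 1 0 0 zero_le_one
      obtain ⟨p, hp, hne⟩ := hne
      exact ⟨(p.1 : ℤ) - (p.2 : ℤ), List.mem_map.mpr ⟨p, hp, rfl⟩, by omega⟩
    · -- the word ends with a trailing `a`-run: rejected with certainty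
      rw [Stmt12.accProb_eq hk0, tagged, Stmt12.runW_cons, Stmt12.run_cent,
        List.map_append, List.map_replicate,
        Stmt12.runW_append, Stmt12.runW_append, Stmt12.runW_dollar]
      obtain ⟨-, hstates⟩ :=
        Stmt12.runEnc hk0 bl hbl 1 0 Stmt12.St.start (Or.inl rfl)
      have hA : ∀ it ∈ Stmt12.runW (Stmt12.runW [((1:ℝ), (Stmt12.St.start : Stmt12.St k), (0:ℤ))]
          ((Stmt12.enc bl).map TSym.letter)) (List.replicate n (TSym.letter Γ2.a)),
          ∃ c, it.2.1 = Stmt12.St.A c := by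
        obtain ⟨n', rfl⟩ : ∃ n', n = n' + 1 := ⟨n - 1, by omega⟩
        rw [List.replicate_succ, Stmt12.runW_cons]
        exact Stmt12.runW_a_states n' _ (Stmt12.run_a_all_A _ hstates)
      rw [Stmt12.mass_run_dollar_A _ hA]
      positivity
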